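/- arXiv:1908.01986 — 2 statements merged into one kernel-verified Lean document; each statement's English description precedes it below -/
import Mathlib

section
/- Let d ≥ 1, let Ω ⊆ ℝ^d be a bounded open set equipped with Lebesgue measure, let a ≤ b be real numbers, and let C > 0. Suppose φ_m : [a,b] → L²(Ω), m ∈ ℕ, is a sequence of functions such that (i) for every m ∈ ℕ and every a ≤ s ≤ t ≤ b one has φ_m(s) ≤ φ_m(t) almost everywhere in Ω, and (ii) ‖φ_m(t)‖_{L²(Ω)} ≤ C for every t ∈ [a,b] and every m ∈ ℕ. Then there exist a strictly increasing map σ : ℕ → ℕ and a function φ : [a,b] → L²(Ω) such that for every t ∈ [a,b] the subsequence φ_{σ(m)}(t) converges weakly to φ(t) in L²(Ω) as m → ∞ (that is, ∫_Ω φ_{σ(m)}(t) g dx → ∫_Ω φ(t) g dx for every g ∈ L²(Ω)); moreover ‖φ(t)‖_{L²(Ω)} ≤ C for every t ∈ [a,b], and φ(s) ≤ φ(t) almost everywhere in Ω for every a ≤ s ≤ t ≤ b. -/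
open Filter MeasureTheory
open scoped RealInnerProductSpace


lemma tendsto_of_matching {α : Type*} {l : Filter α} {u v : ℕ → α}
    (h : Tendsto u atTop l)
    (hm : ∀ N : ℕ, ∀ᶠ n in atTop, ∃ m, N ≤ m ∧ v n = u m) :
    Tendsto v atTop l := by
  rw [tendsto_atTop'] at h ⊢
  intro s hs
  obtain ⟨N, hN⟩ := h s hs
  obtain ⟨M, hM⟩ := (eventually_atTop).1 (hm N)
  refine ⟨M, fun n hn => ?_⟩
  obtain ⟨m, hmN, hvm⟩ := hM n hn
  rw [hvm]; exact hN m hmN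

lemma diagonal_extraction (P : ℕ → (ℕ → ℕ) → Prop)
    (hstab : ∀ k (g f : ℕ → ℕ), P k g →
      (∀ N : ℕ, ∀ᶠ n in atTop, ∃ m, N ≤ m ∧ f n = g m) → P k f)
    (hext : ∀ k (g : ℕ → ℕ), StrictMono g → ∃ τ, StrictMono τ ∧ P k (g ∘ τ)) :
    ∃ σ, StrictMono σ ∧ ∀ k, P k σ := by
  choose τ hτ hP using hext
  let S : ℕ → {f : ℕ → ℕ // StrictMono f} :=
    fun k => Nat.rec ⟨id, strictMono_id⟩
      (fun k g => ⟨g.1 ∘ τ k g.1 g.2, g.2.comp (hτ k g.1 g.2)⟩) k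
  have hPS : ∀ k, P k (S (k+1)).1 := fun k => hP k (S k).1 (S k).2
  have hmatch : ∀ k n i, ∃ m, i ≤ m ∧ (S (k + n)).1 i = (S k).1 m := by
    intro k n
    induction n with
    | zero => exact fun i => ⟨i, le_rfl, rfl⟩
    | succ n ih =>
      intro i
      have h0 : (S (k + (n+1))).1 i = (S (k+n)).1 (τ (k+n) (S (k+n)).1 (S (k+n)).2 i) := rfl
      obtain ⟨m, hm, heq⟩ := ih (τ (k+n) (S (k+n)).1 (S (k+n)).2 i)
      exact ⟨m, le_trans ((hτ _ _ _).le_apply) hm, by rw [h0, heq]⟩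
  set d : ℕ → ℕ := fun n => (S n).1 n with hd
  have hdmono : StrictMono d := by
    refine strictMono_nat_of_lt_succ fun n => ?_
    have h1 : d (n+1) = (S n).1 (τ n (S n).1 (S n).2 (n+1)) := rfl
    have h2 : (n+1 : ℕ) ≤ τ n (S n).1 (S n).2 (n+1) := (hτ _ _ _).le_apply
    calc d n = (S n).1 n := rfl
      _ < (S n).1 (n+1) := (S n).2 (Nat.lt_succ_self n)
      _ ≤ (S n).1 (τ n (S n).1 (S n).2 (n+1)) := (S n).2.monotone h2
      _ = d (n+1) := h1.symm
  refine ⟨d, hdmono, fun k => ?_⟩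
  refine hstab k (S (k+1)).1 d (hPS k) fun N => ?_
  filter_upwards [eventually_ge_atTop (max (k+1) N)] with n hn
  have hn1 : k + 1 ≤ n := le_trans (le_max_left _ _) hn
  obtain ⟨j, hj⟩ := Nat.exists_eq_add_of_le hn1
  obtain ⟨m, hm, heq⟩ := hmatch (k+1) j n
  refine ⟨m, le_trans (le_trans (le_max_right _ _) hn) hm, ?_⟩
  rw [hd]; simp only; rw [hj] at heq ⊢; exact heq

/-- Helly's selection theorem for uniformly bounded monotone real functions on `[a,b]`. -/
lemma helly_real {a b C : ℝ} (f : ℕ → ℝ → ℝ)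
    (hmono : ∀ m, MonotoneOn (f m) (Set.Icc a b))
    (hbdd : ∀ m, ∀ t ∈ Set.Icc a b, |f m t| ≤ C) :
    ∃ τ : ℕ → ℕ, StrictMono τ ∧
      ∀ t ∈ Set.Icc a b, ∃ l, Tendsto (fun m => f (τ m) t) atTop (nhds l) := by
  rcases le_or_gt a b with hab | hab
  swap
  · exact ⟨id, strictMono_id, fun t ht => absurd ht (by simp [Set.Icc_eq_empty_of_lt hab])⟩
  -- the countable dense set D
  set D : Set ℝ := insert a (insert b (Set.Icc a b ∩ Set.range ((↑) : ℚ → ℝ))) with hD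
  have hDsub : D ⊆ Set.Icc a b := by
    rw [hD]
    rintro x (rfl | rfl | ⟨hx, -⟩)
    · exact ⟨le_rfl, hab⟩
    · exact ⟨hab, le_rfl⟩
    · exact hx
  have hDcount : D.Countable :=
    ((Set.countable_range _).mono Set.inter_subset_right).insert b |>.insert a
  have haD : a ∈ D := Set.mem_insert _ _
  have hbD : b ∈ D := Set.mem_insert_of_mem _ (Set.mem_insert _ _)
  obtain ⟨e, he⟩ := Set.Countable.exists_eq_range hDcount ⟨a, haD⟩
  -- Bolzano–Weierstrass extraction step
  have bw : ∀ (x : ℝ), x ∈ Set.Icc a b → ∀ g : ℕ → ℕ, StrictMono g →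
      ∃ τ0 : ℕ → ℕ, StrictMono τ0 ∧ ∃ l, Tendsto (fun m => f (g (τ0 m)) x) atTop (nhds l) := by
    intro x hx g _
    have hmem : ∀ m, f (g m) x ∈ Set.Icc (-C) C := fun m => abs_le.1 (hbdd (g m) x hx)
    obtain ⟨l, _, τ0, hτ0, hl⟩ := tendsto_subseq_of_bounded (Metric.isBounded_Icc (-C) C) hmem
    exact ⟨τ0, hτ0, l, hl⟩
  -- first extraction: convergence on D
  obtain ⟨σ₁, hσ₁, hconv₁⟩ := diagonal_extraction
    (fun n σ => ∃ l, Tendsto (fun m => f (σ m) (e n)) atTop (nhds l))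
    (fun n g f' ⟨l, hl⟩ hmatch => ⟨l, tendsto_of_matching hl (fun N =>
      (hmatch N).mono (fun j ⟨m, hm, hem⟩ => ⟨m, hm, by rw [hem]⟩))⟩)
    (fun n g hg => by
      have hen : e n ∈ Set.Icc a b := hDsub (he ▸ Set.mem_range_self n)
      obtain ⟨τ0, hτ0, l, hl⟩ := bw (e n) hen g hg
      exact ⟨τ0, hτ0, l, hl⟩)
  have hconvD : ∀ x ∈ D, ∃ l, Tendsto (fun m => f (σ₁ m) x) atTop (nhds l) := by
    intro x hx
    rw [he] at hx
    obtain ⟨n, rfl⟩ := hx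
    exact hconv₁ n
  -- the limit function on D
  set L : ℝ → ℝ := fun x => limUnder atTop (fun m => f (σ₁ m) x) with hLdef
  have hL : ∀ x ∈ D, Tendsto (fun m => f (σ₁ m) x) atTop (nhds (L x)) := by
    intro x hx
    obtain ⟨l, hl⟩ := hconvD x hx
    rw [hLdef]; simpa [hl.limUnder_eq] using hl
  have hLbdd : ∀ x ∈ D, |L x| ≤ C := by
    intro x hx
    have h1 : Tendsto (fun m => |f (σ₁ m) x|) atTop (nhds (|L x|)) := (hL x hx).abs
    exact le_of_tendsto h1 (Eventually.of_forall fun m => hbdd (σ₁ m) x (hDsub hx))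
  have hLmono : ∀ x ∈ D, ∀ y ∈ D, x ≤ y → L x ≤ L y := by
    intro x hx y hy hxy
    exact le_of_tendsto_of_tendsto' (hL x hx) (hL y hy)
      (fun m => hmono (σ₁ m) (hDsub hx) (hDsub hy) hxy)
  -- sup/inf envelopes
  set A : ℝ → ℝ := fun t => sSup (L '' {x | x ∈ D ∧ x < t}) with hA
  set B : ℝ → ℝ := fun t => sInf (L '' {x | x ∈ D ∧ t < x}) with hB
  have hAne : ∀ t : ℝ, a < t → Set.Nonempty {x | x ∈ D ∧ x < t} := fun t ht => ⟨a, haD, ht⟩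
  have hBne : ∀ t : ℝ, t < b → Set.Nonempty {x | x ∈ D ∧ t < x} := fun t ht => ⟨b, hbD, ht⟩
  have hAbdd : ∀ t : ℝ, BddAbove (L '' {x | x ∈ D ∧ x < t}) := by
    intro t; refine ⟨C, ?_⟩; rintro y ⟨x, ⟨hx, -⟩, rfl⟩; exact (abs_le.1 (hLbdd x hx)).2
  have hBbdd : ∀ t : ℝ, BddBelow (L '' {x | x ∈ D ∧ t < x}) := by
    intro t; refine ⟨-C, ?_⟩; rintro y ⟨x, ⟨hx, -⟩, rfl⟩; exact (abs_le.1 (hLbdd x hx)).1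
  have hIoo : ∀ t ∈ Set.Icc a b, t ∉ D → a < t ∧ t < b := by
    intro t ht htD
    exact ⟨lt_of_le_of_ne ht.1 (fun h => htD (h ▸ haD)),
      lt_of_le_of_ne ht.2 (fun h => htD (h.symm ▸ hbD))⟩
  have hAB : ∀ t ∈ Set.Icc a b, t ∉ D → A t ≤ B t := by
    intro t ht htD
    obtain ⟨hat', htb'⟩ := hIoo t ht htD
    refine csSup_le ((hAne t hat').image L) ?_
    rintro y ⟨x, ⟨hx, hxt⟩, rfl⟩
    refine le_csInf ((hBne t htb').image L) ?_
    rintro y' ⟨x', ⟨hx', htx'⟩, rfl⟩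
    exact hLmono x hx x' hx' (le_of_lt (lt_trans hxt htx'))
  -- squeeze: at non-jump points, convergence holds along σ₁
  have squeeze : ∀ t ∈ Set.Icc a b, t ∉ D → A t = B t →
      Tendsto (fun m => f (σ₁ m) t) atTop (nhds (A t)) := by
    intro t ht htD hABt
    obtain ⟨hat', htb'⟩ := hIoo t ht htD
    rw [Metric.tendsto_atTop]
    intro ε hε
    obtain ⟨y, hy, hylt⟩ := exists_lt_of_lt_csSup ((hAne t hat').image L)
      (show A t - ε/2 < A t by linarith)
    obtain ⟨x, ⟨hxD, hxt⟩, rfl⟩ := hy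
    obtain ⟨y', hy', hy'lt⟩ := exists_lt_of_csInf_lt ((hBne t htb').image L)
      (show B t < B t + ε/2 by linarith)
    obtain ⟨x', ⟨hx'D, htx'⟩, rfl⟩ := hy'
    obtain ⟨N₁, hN₁⟩ := (Metric.tendsto_atTop).1 (hL x hxD) (ε/2) (by linarith)
    obtain ⟨N₂, hN₂⟩ := (Metric.tendsto_atTop).1 (hL x' hx'D) (ε/2) (by linarith)
    refine ⟨max N₁ N₂, fun m hm => ?_⟩
    have hm₁ := hN₁ m (le_trans (le_max_left _ _) hm)
    have hm₂ := hN₂ m (le_trans (le_max_right _ _) hm)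
    rw [Real.dist_eq, abs_lt] at hm₁ hm₂ ⊢
    have hfl : f (σ₁ m) x ≤ f (σ₁ m) t := hmono (σ₁ m) (hDsub hxD) ht hxt.le
    have hfr : f (σ₁ m) t ≤ f (σ₁ m) x' := hmono (σ₁ m) ht (hDsub hx'D) htx'.le
    constructor
    · linarith
    · linarith
  -- the jump set is countable
  set J : Set ℝ := {t | t ∈ Set.Icc a b ∧ t ∉ D ∧ A t < B t} with hJ
  have hJcount : J.Countable := by
    have hq : ∀ t : J, ∃ q : ℚ, A (t:ℝ) < (q:ℝ) ∧ ((q:ℚ):ℝ) < B (t:ℝ) :=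
      fun t => exists_rat_btwn t.2.2.2
    choose q hq1 hq2 using hq
    have hstep : ∀ s t : J, (s : ℝ) < (t:ℝ) → B (s:ℝ) ≤ A (t:ℝ) := by
      intro s t hst
      obtain ⟨r, hr1, hr2⟩ := exists_rat_btwn hst
      have hrD : (r : ℝ) ∈ D := by
        rw [hD]
        refine Set.mem_insert_of_mem _ (Set.mem_insert_of_mem _ ⟨⟨?_, ?_⟩, ⟨r, rfl⟩⟩)
        · exact le_of_lt (lt_of_le_of_lt s.2.1.1 hr1)
        · exact le_of_lt (lt_of_lt_of_le hr2 t.2.1.2)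
      exact le_trans (csInf_le (hBbdd _) ⟨(r:ℝ), ⟨hrD, hr1⟩, rfl⟩)
        (le_csSup (hAbdd _) ⟨(r:ℝ), ⟨hrD, hr2⟩, rfl⟩)
    have hinj : Function.Injective q := by
      intro s t hqst
      by_contra hne
      have hne' : (s:ℝ) ≠ (t:ℝ) := fun h => hne (Subtype.ext h)
      rcases hne'.lt_or_gt with h | h
      · have h3 : ((q s : ℚ):ℝ) < ((q t : ℚ):ℝ) :=
          lt_trans (lt_of_lt_of_le (hq2 s) (hstep s t h)) (hq1 t)
        rw [hqst] at h3; exact lt_irrefl _ h3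
      · have h3 : ((q t : ℚ):ℝ) < ((q s : ℚ):ℝ) :=
          lt_trans (lt_of_lt_of_le (hq2 t) (hstep t s h)) (hq1 s)
        rw [hqst] at h3; exact lt_irrefl _ h3
    exact Set.countable_coe_iff.mp (Function.Injective.countable hinj)
  -- second extraction: convergence on J
  obtain ⟨e', he'⟩ := (hJcount.insert a).exists_eq_range ⟨a, Set.mem_insert _ _⟩
  have he'mem : ∀ n, e' n ∈ Set.Icc a b := by
    intro n
    have h0 : e' n ∈ insert a J := he' ▸ Set.mem_range_self n
    rcases h0 with h0 | h0
    · rw [h0]; exact ⟨le_rfl, hab⟩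
    · exact h0.1
  obtain ⟨τ, hτ, hconv₂⟩ := diagonal_extraction
    (fun n σ => ∃ l, Tendsto (fun m => f (σ₁ (σ m)) (e' n)) atTop (nhds l))
    (fun n g f' ⟨l, hl⟩ hmatch => ⟨l, tendsto_of_matching hl (fun N =>
      (hmatch N).mono (fun j ⟨m, hm, hem⟩ => ⟨m, hm, by rw [hem]⟩))⟩)
    (fun n g hg => bw (e' n) (he'mem n) (σ₁ ∘ g) (hσ₁.comp hg))
  refine ⟨σ₁ ∘ τ, hσ₁.comp hτ, fun t ht => ?_⟩
  by_cases htD : t ∈ D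
  · obtain ⟨l, hl⟩ := hconvD t htD
    exact ⟨l, hl.comp hτ.tendsto_atTop⟩
  by_cases htJ : t ∈ J
  · have h0 : t ∈ insert a J := Set.mem_insert_of_mem _ htJ
    rw [he'] at h0
    obtain ⟨n, rfl⟩ := h0
    exact hconv₂ n
  · have hABt : A t = B t :=
      le_antisymm (hAB t ht htD) (not_lt.1 fun h => htJ ⟨ht, htD, h⟩)
    exact ⟨A t, (squeeze t ht htD hABt).comp hτ.tendsto_atTop⟩

variable {X : Type*} [MeasurableSpace X] {μ : Measure X}

lemma inner_mono_of_le (u v h : Lp ℝ 2 μ) (huv : u ≤ v) (hh : 0 ≤ h) :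
    ⟪u, h⟫ ≤ ⟪v, h⟫ := by
  have h1 : ⟪u, h⟫ = ∫ a, (u a) * (h a) ∂μ := by rw [MeasureTheory.L2.inner_def]; simp only [Real.inner_apply]
  have h2 : ⟪v, h⟫ = ∫ a, (v a) * (h a) ∂μ := by rw [MeasureTheory.L2.inner_def]; simp only [Real.inner_apply]
  rw [h1, h2]
  refine integral_mono_ae ?_ ?_ ?_
  · simpa only [Real.inner_apply] using MeasureTheory.L2.integrable_inner (𝕜 := ℝ) u h
  · simpa only [Real.inner_apply] using MeasureTheory.L2.integrable_inner (𝕜 := ℝ) v h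
  · filter_upwards [(Lp.coeFn_le u v).2 huv, (Lp.coeFn_nonneg h).2 hh] with a ha hha
    exact mul_le_mul_of_nonneg_right ha hha

lemma le_of_inner_mono (u v : Lp ℝ 2 μ)
    (h : ∀ g : Lp ℝ 2 μ, 0 ≤ g → ⟪u, g⟫ ≤ ⟪v, g⟫) : u ≤ v := by
  set w : Lp ℝ 2 μ := v - u with hw
  have h0 : 0 ≤ ⟪w, w⁻⟫ := by
    have := h w⁻ (negPart_nonneg w)
    rw [hw, inner_sub_left]
    linarith
  have hpn : ⟪w⁺, (w⁻ : Lp ℝ 2 μ)⟫ = 0 := by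
    have h1 : ⟪w⁺, (w⁻ : Lp ℝ 2 μ)⟫ = ∫ a, (w⁺ a) * (w⁻ a) ∂μ := by
      rw [MeasureTheory.L2.inner_def]; simp only [Real.inner_apply]
    rw [h1]
    have h2 : (fun a => (w⁺ a) * (w⁻ a)) =ᵐ[μ] 0 := by
      have hp : ⇑(w⁺ : Lp ℝ 2 μ) =ᵐ[μ] ⇑w ⊔ ⇑(0 : Lp ℝ 2 μ) := Lp.coeFn_sup _ _
      have hn : ⇑(w⁻ : Lp ℝ 2 μ) =ᵐ[μ] ⇑(-w) ⊔ ⇑(0 : Lp ℝ 2 μ) := by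
        rw [negPart_def]; exact Lp.coeFn_sup _ _
      filter_upwards [hp, hn, Lp.coeFn_zero ℝ 2 μ, Lp.coeFn_neg w] with a hpa hna h0a hnega
      simp only [Pi.sup_apply] at hpa hna
      rw [hpa, hna, h0a, hnega]
      simp only [Pi.zero_apply, Pi.neg_apply]
      rcases le_total (w a) 0 with hc | hc
      · rw [sup_eq_right.2 hc]; ring
      · rw [sup_eq_right.2 (by linarith : -(w a) ≤ (0:ℝ))]; ring
    rw [integral_congr_ae h2]; simp
  have hsplit : w = w⁺ - w⁻ := (posPart_sub_negPart w).symm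
  have h3 : ⟪w, (w⁻ : Lp ℝ 2 μ)⟫ = -‖(w⁻ : Lp ℝ 2 μ)‖^2 := by
    nth_rewrite 1 [hsplit]
    rw [inner_sub_left, hpn, real_inner_self_eq_norm_sq]
    ring
  have h4 : ‖(w⁻ : Lp ℝ 2 μ)‖ = 0 := by nlinarith [norm_nonneg (w⁻ : Lp ℝ 2 μ)]
  have h5 : (w⁻ : Lp ℝ 2 μ) = 0 := norm_eq_zero.1 h4
  have h6 : (0 : Lp ℝ 2 μ) ≤ w := by
    rwa [← negPart_eq_zero]
  rw [hw] at h6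
  exact sub_nonneg.1 h6

set_option maxHeartbeats 1000000 in
/-- Helly-type selection theorem in `L²(Ω)` (Lemma 5.3 of the paper):
from a sequence of maps `φ_m : [a,b] → L²(Ω)` that are nondecreasing in time
with respect to the a.e. order and uniformly norm-bounded by `C`, one can
extract a subsequence converging weakly in `L²(Ω)` at every time `t ∈ [a,b]`
to a limit function `φ` which is again nondecreasing and bounded by `C`. -/
theorem helly_selection_L2
    (d : ℕ) (hd : 1 ≤ d) (Ω : Set (EuclideanSpace ℝ (Fin d)))
    (hΩopen : IsOpen Ω) (hΩbounded : Bornology.IsBounded Ω)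
    (a b C : ℝ) (hab : a ≤ b) (hC : 0 < C)
    (φ : ℕ → ℝ → Lp ℝ 2 (volume.restrict Ω))
    (hmono : ∀ m, ∀ s ∈ Set.Icc a b, ∀ t ∈ Set.Icc a b, s ≤ t → φ m s ≤ φ m t)
    (hbdd : ∀ m, ∀ t ∈ Set.Icc a b, ‖φ m t‖ ≤ C) :
    ∃ σ : ℕ → ℕ, StrictMono σ ∧
      ∃ ψ : ℝ → Lp ℝ 2 (volume.restrict Ω),
        (∀ t ∈ Set.Icc a b, ∀ g : Lp ℝ 2 (volume.restrict Ω),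
          Tendsto (fun m => ⟪φ (σ m) t, g⟫) atTop (nhds ⟪ψ t, g⟫)) ∧
        (∀ t ∈ Set.Icc a b, ‖ψ t‖ ≤ C) ∧
        (∀ s ∈ Set.Icc a b, ∀ t ∈ Set.Icc a b, s ≤ t → ψ s ≤ ψ t) := by
  classical
  haveI : Fact ((2 : ENNReal) ≠ ⊤) := ⟨by norm_num⟩
  haveI : SecondCountableTopology (Lp ℝ 2 (volume.restrict Ω)) := Lp.SecondCountableTopology
  -- countable dense family
  set G : ℕ → Lp ℝ 2 (volume.restrict Ω) :=
    TopologicalSpace.denseSeq (Lp ℝ 2 (volume.restrict Ω)) with hG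
  have hGdense : DenseRange G :=
    TopologicalSpace.denseRange_denseSeq (Lp ℝ 2 (volume.restrict Ω))
  set hfun : ℕ → Lp ℝ 2 (volume.restrict Ω) := fun k => if k % 2 = 0 then (G (k/2))⁺ else (G (k/2))⁻ with hhfun
  have hfun_nonneg : ∀ k, (0 : Lp ℝ 2 (volume.restrict Ω)) ≤ hfun k := by
    intro k
    rw [hhfun]
    by_cases hk : k % 2 = 0
    · simp only [hk, if_true]; exact posPart_nonneg _
    · simp only [hk, if_false]; exact negPart_nonneg _
  -- diagonal extraction over the countable family of test functions
  obtain ⟨σ, hσ, hconvk⟩ := diagonal_extraction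
    (fun k σ => ∀ t ∈ Set.Icc a b, ∃ l,
      Tendsto (fun m => ⟪φ (σ m) t, hfun k⟫) atTop (nhds l))
    (by
      rintro k g f' hP hmatch t ht
      obtain ⟨l, hl⟩ := hP t ht
      exact ⟨l, tendsto_of_matching hl (fun N =>
        (hmatch N).mono (fun j ⟨m, hm, hem⟩ => ⟨m, hm, by rw [hem]⟩))⟩)
    (by
      intro k g hg
      obtain ⟨τ, hτ, hP⟩ := helly_real (C := C * ‖hfun k‖)
        (f := fun m t => ⟪φ (g m) t, hfun k⟫)
        (fun m s hs t ht hst =>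
          inner_mono_of_le _ _ _ (hmono (g m) s hs t ht hst) (hfun_nonneg k))
        (fun m t ht => le_trans (abs_real_inner_le_norm _ _)
          (mul_le_mul_of_nonneg_right (hbdd (g m) t ht) (norm_nonneg _)))
      exact ⟨τ, hτ, hP⟩)
  -- convergence for every test vector g
  have hconvG : ∀ t ∈ Set.Icc a b, ∀ j, ∃ l,
      Tendsto (fun m => ⟪φ (σ m) t, G j⟫) atTop (nhds l) := by
    intro t ht j
    obtain ⟨l₁, hl₁⟩ := hconvk (2*j) t ht
    obtain ⟨l₂, hl₂⟩ := hconvk (2*j+1) t ht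
    have e1 : hfun (2*j) = (G j)⁺ := by
      rw [hhfun]; simp only [show (2*j) % 2 = 0 by omega, show (2*j)/2 = j by omega, if_true]
    have e2 : hfun (2*j+1) = (G j)⁻ := by
      rw [hhfun]
      simp only [show (2*j+1) % 2 = 1 by omega, show (2*j+1)/2 = j by omega]
      norm_num
    refine ⟨l₁ - l₂, ?_⟩
    have : ∀ m, ⟪φ (σ m) t, G j⟫ = ⟪φ (σ m) t, hfun (2*j)⟫ - ⟪φ (σ m) t, hfun (2*j+1)⟫ := by
      intro m
      rw [e1, e2, ← inner_sub_right, posPart_sub_negPart]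
    simp only [this]
    exact hl₁.sub hl₂
  have hconv : ∀ t ∈ Set.Icc a b, ∀ g : Lp ℝ 2 (volume.restrict Ω), ∃ l,
      Tendsto (fun m => ⟪φ (σ m) t, g⟫) atTop (nhds l) := by
    intro t ht g
    have hx : ∀ m, ‖φ (σ m) t‖ ≤ C := fun m => hbdd (σ m) t ht
    have hcs : CauchySeq (fun m => ⟪φ (σ m) t, g⟫) := by
      rw [Metric.cauchySeq_iff]
      intro ε hε
      obtain ⟨j, hj⟩ := Metric.denseRange_iff.1 hGdense g (ε / (4 * (C+1)))
        (by positivity)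
      have hjd : ‖G j - g‖ < ε / (4 * (C+1)) := by
        rw [← dist_eq_norm]; rw [dist_comm]; exact hj
      have hdiff : ∀ m, |⟪φ (σ m) t, g⟫ - ⟪φ (σ m) t, G j⟫| ≤ C * (ε / (4 * (C+1))) := by
        intro m
        rw [← inner_sub_right]
        refine le_trans (abs_real_inner_le_norm _ _) ?_
        have h1 : ‖g - G j‖ ≤ ε / (4 * (C+1)) := by
          rw [norm_sub_rev]; exact hjd.le
        exact mul_le_mul (hx m) h1 (norm_nonneg _) hC.le
      have hcsd : CauchySeq (fun m => ⟪φ (σ m) t, G j⟫) := by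
        obtain ⟨l, hl⟩ := hconvG t ht j
        exact hl.cauchySeq
      rw [Metric.cauchySeq_iff] at hcsd
      obtain ⟨N, hN⟩ := hcsd (ε/4) (by linarith)
      refine ⟨N, fun m hm n hn => ?_⟩
      have h2 := hN m hm n hn
      rw [Real.dist_eq] at h2 ⊢
      have h3 := hdiff m
      have h4 := hdiff n
      have hCfrac : C * (ε / (4 * (C+1))) ≤ ε/4 := by
        have hC1 : (0:ℝ) < C + 1 := by linarith
        have he : C * (ε / (4 * (C+1))) = (C / (C+1)) * (ε/4) := by
          field_simp
        rw [he]
        have h5 : C / (C+1) ≤ 1 := by rw [div_le_one hC1]; linarith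
        calc (C / (C+1)) * (ε/4) ≤ 1 * (ε/4) :=
              mul_le_mul_of_nonneg_right h5 (by linarith)
          _ = ε/4 := one_mul _
      have habs1 : |⟪φ (σ m) t, g⟫ - ⟪φ (σ n) t, g⟫| ≤
          |⟪φ (σ m) t, g⟫ - ⟪φ (σ m) t, G j⟫| + |⟪φ (σ m) t, G j⟫ - ⟪φ (σ n) t, g⟫| :=
        abs_sub_le _ _ _
      have habs2 : |⟪φ (σ m) t, G j⟫ - ⟪φ (σ n) t, g⟫| ≤
          |⟪φ (σ m) t, G j⟫ - ⟪φ (σ n) t, G j⟫| + |⟪φ (σ n) t, G j⟫ - ⟪φ (σ n) t, g⟫| :=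
        abs_sub_le _ _ _
      rw [abs_sub_comm] at h4
      linarith
    exact cauchySeq_tendsto_of_complete hcs
  -- build the weak limit via the Riesz representation
  have main : ∀ t, t ∈ Set.Icc a b → ∃ x : Lp ℝ 2 (volume.restrict Ω), ∀ g : Lp ℝ 2 (volume.restrict Ω),
      Tendsto (fun m => ⟪φ (σ m) t, g⟫) atTop (nhds ⟪x, g⟫) := by
    intro t ht
    have hc := hconv t ht
    choose F hF using hc
    have hadd : ∀ g g' : Lp ℝ 2 (volume.restrict Ω), F (g + g') = F g + F g' := by
      intro g g'
      refine tendsto_nhds_unique ?_ ((hF g).add (hF g'))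
      have : ∀ m, ⟪φ (σ m) t, g + g'⟫ = ⟪φ (σ m) t, g⟫ + ⟪φ (σ m) t, g'⟫ :=
        fun m => inner_add_right _ _ _
      simpa only [this] using hF (g + g')
    have hsmul : ∀ (c : ℝ) (g : Lp ℝ 2 (volume.restrict Ω)), F (c • g) = c * F g := by
      intro c g
      refine tendsto_nhds_unique ?_ ((hF g).const_mul c)
      have : ∀ m, ⟪φ (σ m) t, c • g⟫ = c * ⟪φ (σ m) t, g⟫ :=
        fun m => real_inner_smul_right _ _ _
      simpa only [this] using hF (c • g)
    have hbound : ∀ g : Lp ℝ 2 (volume.restrict Ω), ‖F g‖ ≤ C * ‖g‖ := by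
      intro g
      rw [Real.norm_eq_abs]
      refine le_of_tendsto (hF g).abs (Eventually.of_forall fun m => ?_)
      exact le_trans (abs_real_inner_le_norm _ _)
        (mul_le_mul_of_nonneg_right (hbdd (σ m) t ht) (norm_nonneg _))
    set T : Lp ℝ 2 (volume.restrict Ω) →L[ℝ] ℝ := LinearMap.mkContinuous
      { toFun := F, map_add' := hadd, map_smul' := hsmul } C hbound with hT
    refine ⟨(InnerProductSpace.toDual ℝ (Lp ℝ 2 (volume.restrict Ω))).symm T, fun g => ?_⟩
    have : ⟪(InnerProductSpace.toDual ℝ (Lp ℝ 2 (volume.restrict Ω))).symm T, g⟫ = T g :=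
      InnerProductSpace.toDual_symm_apply
    rw [this]
    exact hF g
  set ψ : ℝ → Lp ℝ 2 (volume.restrict Ω) := fun t => if h : t ∈ Set.Icc a b then (main t h).choose else 0 with hψdef
  have hψ : ∀ t (ht : t ∈ Set.Icc a b), ∀ g : Lp ℝ 2 (volume.restrict Ω),
      Tendsto (fun m => ⟪φ (σ m) t, g⟫) atTop (nhds ⟪ψ t, g⟫) := by
    intro t ht g
    rw [hψdef]
    simp only [dif_pos ht]
    exact (main t ht).choose_spec g
  refine ⟨σ, hσ, ψ, fun t ht g => hψ t ht g, ?_, ?_⟩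
  · -- norm bound
    intro t ht
    have h1 : ⟪ψ t, ψ t⟫ ≤ C * ‖ψ t‖ := by
      refine le_of_tendsto (hψ t ht (ψ t)) (Eventually.of_forall fun m => ?_)
      exact le_trans (real_inner_le_norm _ _)
        (mul_le_mul_of_nonneg_right (hbdd (σ m) t ht) (norm_nonneg _))
    rw [real_inner_self_eq_norm_sq] at h1
    nlinarith [norm_nonneg (ψ t)]
  · -- monotonicity
    intro s hs t ht hst
    refine le_of_inner_mono _ _ fun g hg => ?_
    exact le_of_tendsto_of_tendsto' (hψ s hs g) (hψ t ht g)
      (fun m => inner_mono_of_le _ _ _ (hmono (σ m) s hs t ht hst) hg)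
end

section
/- Let T > 0, let 0 < δ < 1, let ε > 0, and let Ψ : ℝ → ℝ be a continuously differentiable function with 0 ≤ Ψ ≤ 1, Ψ(r) = 0 for |r| ≤ δ, and Ψ(r) = 1 for |r| ≥ 1. Let s : ℝ → ℝ be continuously differentiable with s(0) = 0, and for t ∈ [0,T] set Γ_t := {(σ,0) ∈ ℝ² : σ ≤ s(t)}. Define Φ(y) := Ψ(dist(y,Γ_0)) for y ∈ ℝ² and v_ε(t,x) := Ψ(dist(x,Γ_t)/ε) for t ∈ [0,T], x ∈ ℝ². Then: (i) Φ is continuously differentiable on ℝ²; (ii) for every t ∈ [0,T] and x ∈ ℝ², the map τ ↦ v_ε(τ,x) is differentiable at t with derivative ∂_t v_ε(t,x) = −(s'(t)/ε) ∂₁Φ((x − (s(t),0))/ε), where ∂₁Φ denotes the partial derivative of Φ with respect to the first coordinate; and (iii) for every t ∈ [0,T], ∫_{ℝ²} |∂_t v_ε(t,x)|² dx = s'(t)² ∫_{ℝ²} |∂₁Φ(y)|² dy. -/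
open MeasureTheory Filter

section aux

lemma hasDerivAt_maxsq (x : ℝ) :
    HasDerivAt (fun x : ℝ => max x 0 ^ 2) (2 * max x 0) x := by
  rcases lt_trichotomy x 0 with h | rfl | h
  · have hev : (fun x : ℝ => max x 0 ^ 2) =ᶠ[nhds x] fun _ => 0 := by
      filter_upwards [Iio_mem_nhds h] with z hz
      simp [max_eq_right (le_of_lt (Set.mem_Iio.mp hz))]
    simpa [max_eq_right h.le] using (hasDerivAt_const x (0:ℝ)).congr_of_eventuallyEq hev
  · rw [hasDerivAt_iff_tendsto_slope]
    simp only [max_self, mul_zero]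
    apply squeeze_zero_norm' (a := fun z : ℝ => ‖z‖)
    · filter_upwards [self_mem_nhdsWithin] with z (hz : z ≠ 0)
      rw [slope_def_field]
      simp only [max_eq_right le_rfl, ne_eq, OfNat.ofNat_ne_zero, not_false_eq_true, zero_pow,
        sub_zero]
      have h1 : max z 0 ^ 2 ≤ z ^ 2 := by
        rcases le_total z 0 with h' | h'
        · rw [max_eq_right h']; simpa using sq_nonneg z
        · rw [max_eq_left h']
      have h2 : (0:ℝ) ≤ max z 0 ^ 2 := sq_nonneg _
      rw [Real.norm_eq_abs, Real.norm_eq_abs, abs_div, abs_of_nonneg h2,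
        div_le_iff₀ (abs_pos.mpr hz)]
      calc max z 0 ^ 2 ≤ z ^ 2 := h1
        _ = |z| * |z| := by rw [abs_mul_abs_self z]; ring
    · simpa using (continuous_norm.tendsto (0:ℝ)).mono_left nhdsWithin_le_nhds
  · have hev : (fun x : ℝ => max x 0 ^ 2) =ᶠ[nhds x] fun z => z ^ 2 := by
      filter_upwards [Ioi_mem_nhds h] with z hz
      simp [max_eq_left (le_of_lt (Set.mem_Ioi.mp hz))]
    have := (hasDerivAt_pow 2 x).congr_of_eventuallyEq hev
    simpa [max_eq_left h.le, mul_comm] using this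

lemma contDiff_maxsq : ContDiff ℝ 1 (fun x : ℝ => max x 0 ^ 2) := by
  rw [contDiff_one_iff_deriv]
  refine ⟨fun x => (hasDerivAt_maxsq x).differentiableAt, ?_⟩
  have : deriv (fun x : ℝ => max x 0 ^ 2) = fun x => 2 * max x 0 :=
    funext fun x => (hasDerivAt_maxsq x).deriv
  rw [this]
  exact continuous_const.mul (continuous_id.max continuous_const)

lemma crack_infDist (c : ℝ) (y : EuclideanSpace ℝ (Fin 2)) :
    Metric.infDist y {p : EuclideanSpace ℝ (Fin 2) | p 1 = 0 ∧ p 0 ≤ c}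
      = Real.sqrt (max (y 0 - c) 0 ^ 2 + (y 1) ^ 2) := by
  set S : Set (EuclideanSpace ℝ (Fin 2)) := {p | p 1 = 0 ∧ p 0 ≤ c} with hS
  set q : EuclideanSpace ℝ (Fin 2) := EuclideanSpace.single 0 (min (y 0) c) with hqdef
  have hq0 : q 0 = min (y 0) c := by simp [hqdef, EuclideanSpace.single_apply]
  have hq1 : q 1 = 0 := by simp [hqdef, EuclideanSpace.single_apply]
  have hqS : q ∈ S := ⟨hq1, by rw [hq0]; exact min_le_right _ _⟩
  have hdistq : dist y q = Real.sqrt (max (y 0 - c) 0 ^ 2 + (y 1) ^ 2) := by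
    rw [EuclideanSpace.dist_eq, Fin.sum_univ_two, hq0, hq1,
      Real.dist_eq, Real.dist_eq, sq_abs, sq_abs]
    rcases le_total (y 0) c with h | h
    · rw [min_eq_left h, max_eq_right (by linarith)]; norm_num
    · rw [min_eq_right h, max_eq_left (by linarith)]; norm_num
  refine le_antisymm ((Metric.infDist_le_dist_of_mem hqS).trans_eq hdistq) ?_
  by_contra h
  push_neg at h
  obtain ⟨p, hp, hlt⟩ := (Metric.infDist_lt_iff ⟨q, hqS⟩).mp h
  have hkey : Real.sqrt (max (y 0 - c) 0 ^ 2 + (y 1) ^ 2) ≤ dist y p := by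
    rw [EuclideanSpace.dist_eq, Fin.sum_univ_two]
    apply Real.sqrt_le_sqrt
    have h1 : (y 1) ^ 2 ≤ dist (y 1) (p 1) ^ 2 := by
      rw [hp.1, Real.dist_eq, sub_zero, sq_abs]
    have h0 : max (y 0 - c) 0 ^ 2 ≤ dist (y 0) (p 0) ^ 2 := by
      rw [Real.dist_eq, sq_abs]
      rcases le_total (y 0) c with h' | h'
      · rw [max_eq_right (by linarith)]; nlinarith [sq_nonneg (y 0 - p 0)]
      · rw [max_eq_left (by linarith)]
        have hp0 := hp.2
        exact pow_le_pow_left₀ (by linarith) (by linarith) 2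
    linarith
  exact hlt.not_ge hkey

lemma contDiff_crackF :
    ContDiff ℝ 1 (fun y : EuclideanSpace ℝ (Fin 2) => max (y 0) 0 ^ 2 + (y 1) ^ 2) :=
  (contDiff_maxsq.comp (EuclideanSpace.proj (0 : Fin 2)).contDiff).add
    ((EuclideanSpace.proj (1 : Fin 2)).contDiff.pow 2)

lemma contDiff_phi_form (Ψ : ℝ → ℝ) (hΨ : ContDiff ℝ 1 Ψ) (δ : ℝ) (hδ0 : 0 < δ)
    (hΨ0 : ∀ r, |r| ≤ δ → Ψ r = 0) :
    ContDiff ℝ 1 (fun y : EuclideanSpace ℝ (Fin 2) =>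
      Ψ (Real.sqrt (max (y 0) 0 ^ 2 + (y 1) ^ 2))) := by
  rw [contDiff_iff_contDiffAt]
  intro y
  by_cases hy : Real.sqrt (max (y 0) 0 ^ 2 + (y 1) ^ 2) < δ
  · have hcont : Continuous (fun z : EuclideanSpace ℝ (Fin 2) =>
        Real.sqrt (max (z 0) 0 ^ 2 + (z 1) ^ 2)) :=
      Real.continuous_sqrt.comp contDiff_crackF.continuous
    have hmem : {z : EuclideanSpace ℝ (Fin 2) |
        Real.sqrt (max (z 0) 0 ^ 2 + (z 1) ^ 2) < δ} ∈ nhds y :=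
      (isOpen_lt hcont continuous_const).mem_nhds hy
    have hev : (fun z : EuclideanSpace ℝ (Fin 2) =>
        Ψ (Real.sqrt (max (z 0) 0 ^ 2 + (z 1) ^ 2))) =ᶠ[nhds y] fun _ => 0 := by
      filter_upwards [hmem] with z hz
      exact hΨ0 _ (by rw [abs_of_nonneg (Real.sqrt_nonneg _)]; exact le_of_lt hz)
    exact (contDiffAt_const (c := (0:ℝ))).congr_of_eventuallyEq hev
  · push_neg at hy
    have hpos : 0 < max (y 0) 0 ^ 2 + (y 1) ^ 2 := by
      by_contra hle
      push_neg at hle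
      have h0 : max (y 0) 0 ^ 2 + (y 1) ^ 2 = 0 := le_antisymm hle (by positivity)
      rw [h0, Real.sqrt_zero] at hy
      linarith
    exact hΨ.contDiffAt.comp y
      ((Real.contDiffAt_sqrt hpos.ne').comp y contDiff_crackF.contDiffAt)

end aux

/-- The computation of Remark 2.5 of the paper: for a rectilinear crack
`Γ_t = {(σ,0) : σ ≤ s(t)}` moving along the `x₁`-axis and the optimal
phase-field profile `v_ε(t,x) = Ψ(dist(x,Γ_t)/ε)` with
`Φ(y) = Ψ(dist(y,Γ_0))`, one has: (i) `Φ` is `C¹`; (ii) the time derivative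
of `v_ε` is `∂_t v_ε(t,x) = −(s'(t)/ε) ∂₁Φ((x − (s(t),0))/ε)`; and (iii)
`∫_{ℝ²} |∂_t v_ε(t,x)|² dx = s'(t)² ∫_{ℝ²} |∂₁Φ(y)|² dy`. -/
theorem phase_field_dissipation_of_moving_crack
    (T : ℝ) (hT : 0 < T) (δ : ℝ) (hδ0 : 0 < δ) (hδ1 : δ < 1)
    (ε : ℝ) (hε : 0 < ε)
    (Ψ : ℝ → ℝ) (hΨ : ContDiff ℝ 1 Ψ)
    (hΨ01 : ∀ r, 0 ≤ Ψ r ∧ Ψ r ≤ 1)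
    (hΨ0 : ∀ r, |r| ≤ δ → Ψ r = 0)
    (hΨ1 : ∀ r, 1 ≤ |r| → Ψ r = 1)
    (s : ℝ → ℝ) (hs : ContDiff ℝ 1 s) (hs0 : s 0 = 0)
    (Γ : ℝ → Set (EuclideanSpace ℝ (Fin 2)))
    (hΓ : ∀ t, Γ t = {p : EuclideanSpace ℝ (Fin 2) | p 1 = 0 ∧ p 0 ≤ s t})
    (Φ : EuclideanSpace ℝ (Fin 2) → ℝ)
    (hΦ : ∀ y, Φ y = Ψ (Metric.infDist y (Γ 0)))
    (v : ℝ → EuclideanSpace ℝ (Fin 2) → ℝ)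
    (hv : ∀ t x, v t x = Ψ (Metric.infDist x (Γ t) / ε)) :
    ContDiff ℝ 1 Φ ∧
    (∀ t ∈ Set.Icc (0:ℝ) T, ∀ x : EuclideanSpace ℝ (Fin 2),
      HasDerivAt (fun τ => v τ x)
        (-(deriv s t / ε) *
          fderiv ℝ Φ (ε⁻¹ • (x - EuclideanSpace.single (0 : Fin 2) (s t)))
            (EuclideanSpace.single (0 : Fin 2) 1)) t) ∧
    (∀ t ∈ Set.Icc (0:ℝ) T,
      ∫ x : EuclideanSpace ℝ (Fin 2), (deriv (fun τ => v τ x) t) ^ 2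
        = (deriv s t) ^ 2 *
          ∫ y : EuclideanSpace ℝ (Fin 2),
            (fderiv ℝ Φ y (EuclideanSpace.single (0 : Fin 2) 1)) ^ 2) := by
  classical
  set D : EuclideanSpace ℝ (Fin 2) → ℝ :=
    fun y => Real.sqrt (max (y 0) 0 ^ 2 + (y 1) ^ 2) with hD
  set e : EuclideanSpace ℝ (Fin 2) := EuclideanSpace.single (0 : Fin 2) (1:ℝ) with he
  have hsingle : ∀ r : ℝ, EuclideanSpace.single (0 : Fin 2) r = r • e := by
    intro r
    ext i
    simp [he, EuclideanSpace.single_apply, mul_ite]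
  -- Φ in terms of D
  have hΦD : ∀ y, Φ y = Ψ (D y) := by
    intro y
    have h0 : Γ 0 = {p : EuclideanSpace ℝ (Fin 2) | p 1 = 0 ∧ p 0 ≤ (0:ℝ)} := by
      rw [hΓ, hs0]
    rw [hΦ, h0, crack_infDist, hD]
    norm_num
  -- scaling identity
  have key : ∀ a b : ℝ, Real.sqrt (max (ε⁻¹ * a) 0 ^ 2 + (ε⁻¹ * b) ^ 2)
      = Real.sqrt (max a 0 ^ 2 + b ^ 2) / ε := by
    intro a b
    have hεinv : (0:ℝ) < ε⁻¹ := inv_pos.mpr hε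
    have h1 : max (ε⁻¹ * a) 0 = ε⁻¹ * max a 0 := by
      rcases le_total a 0 with h | h
      · rw [max_eq_right h, max_eq_right (by nlinarith), mul_zero]
      · rw [max_eq_left h, max_eq_left (by positivity)]
    rw [h1, mul_pow, mul_pow, ← mul_add, Real.sqrt_mul (by positivity),
      Real.sqrt_sq hεinv.le, div_eq_inv_mul]
  -- v in terms of Φ
  have hvΦ : ∀ τ (x : EuclideanSpace ℝ (Fin 2)),
      v τ x = Φ (ε⁻¹ • (x - EuclideanSpace.single (0 : Fin 2) (s τ))) := by
    intro τ x
    rw [hv, hΓ, crack_infDist, hΦD]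
    congr 1
    have hz0 : (ε⁻¹ • (x - EuclideanSpace.single (0 : Fin 2) (s τ))) 0
        = ε⁻¹ * (x 0 - s τ) := by
      simp [EuclideanSpace.single_apply]
    have hz1 : (ε⁻¹ • (x - EuclideanSpace.single (0 : Fin 2) (s τ))) 1
        = ε⁻¹ * x 1 := by
      simp [EuclideanSpace.single_apply]
    rw [hD]
    simp only [hz0, hz1]
    rw [key]
  -- (i)
  have hI : ContDiff ℝ 1 Φ := by
    rw [show Φ = fun y => Ψ (D y) from funext hΦD, hD]
    exact contDiff_phi_form Ψ hΨ δ hδ0 hΨ0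
  have hΦdiff : Differentiable ℝ Φ := hI.differentiable one_ne_zero
  -- (ii)
  have hII : ∀ t ∈ Set.Icc (0:ℝ) T, ∀ x : EuclideanSpace ℝ (Fin 2),
      HasDerivAt (fun τ => v τ x)
        (-(deriv s t / ε) *
          fderiv ℝ Φ (ε⁻¹ • (x - EuclideanSpace.single (0 : Fin 2) (s t))) e) t := by
    intro t ht x
    have hp : HasDerivAt (fun τ => s τ • e) (deriv s t • e) t :=
      ((hs.differentiable one_ne_zero) t).hasDerivAt.smul_const e
    have h2 : HasDerivAt (fun τ => x - s τ • e) (-(deriv s t • e)) t := hp.const_sub x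
    have h3 : HasDerivAt (fun τ => ε⁻¹ • (x - s τ • e)) (ε⁻¹ • -(deriv s t • e)) t :=
      h2.const_smul ε⁻¹
    have h5 : HasDerivAt (fun τ => Φ (ε⁻¹ • (x - s τ • e)))
        (fderiv ℝ Φ (ε⁻¹ • (x - s t • e)) (ε⁻¹ • -(deriv s t • e))) t :=
      (hΦdiff _).hasFDerivAt.comp_hasDerivAt t h3
    have hfun : (fun τ => v τ x) = fun τ => Φ (ε⁻¹ • (x - s τ • e)) := by
      funext τ
      rw [hvΦ, hsingle]
    rw [hfun, hsingle (s t)]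
    convert h5 using 1
    have hsm : ε⁻¹ • -(deriv s t • e) = (-(deriv s t / ε)) • e := by
      rw [smul_neg, smul_smul, ← neg_smul, div_eq_inv_mul, mul_comm]
    rw [hsm, ContinuousLinearMap.map_smul, smul_eq_mul]
  refine ⟨hI, hII, ?_⟩
  -- (iii)
  intro t ht
  set a : EuclideanSpace ℝ (Fin 2) := EuclideanSpace.single (0 : Fin 2) (s t) with ha
  have hde : ∀ x : EuclideanSpace ℝ (Fin 2), deriv (fun τ => v τ x) t
      = -(deriv s t / ε) * fderiv ℝ Φ (ε⁻¹ • (x - a)) e := fun x => (hII t ht x).deriv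
  have hfr : (Module.finrank ℝ (EuclideanSpace ℝ (Fin 2))) = 2 := finrank_euclideanSpace_fin
  calc ∫ x : EuclideanSpace ℝ (Fin 2), (deriv (fun τ => v τ x) t) ^ 2
      = ∫ x : EuclideanSpace ℝ (Fin 2),
          (deriv s t / ε) ^ 2 * (fderiv ℝ Φ (ε⁻¹ • (x - a)) e) ^ 2 := by
        refine integral_congr_ae (Eventually.of_forall fun x => ?_)
        dsimp only; rw [hde x]; ring
    _ = (deriv s t / ε) ^ 2 * ∫ x : EuclideanSpace ℝ (Fin 2),
          (fderiv ℝ Φ (ε⁻¹ • (x - a)) e) ^ 2 := integral_const_mul _ _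
    _ = (deriv s t / ε) ^ 2 * ∫ x : EuclideanSpace ℝ (Fin 2),
          (fderiv ℝ Φ (ε⁻¹ • x) e) ^ 2 := by
        rw [integral_sub_right_eq_self (fun z => (fderiv ℝ Φ (ε⁻¹ • z) e) ^ 2) a]
    _ = (deriv s t / ε) ^ 2 *
          (|((ε⁻¹:ℝ) ^ Module.finrank ℝ (EuclideanSpace ℝ (Fin 2)))⁻¹| •
            ∫ y : EuclideanSpace ℝ (Fin 2), (fderiv ℝ Φ y e) ^ 2) := by
        rw [Measure.integral_comp_smul volume (fun y : EuclideanSpace ℝ (Fin 2) =>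
          (fderiv ℝ Φ y e) ^ 2) ε⁻¹]
    _ = (deriv s t) ^ 2 * ∫ y : EuclideanSpace ℝ (Fin 2), (fderiv ℝ Φ y e) ^ 2 := by
        rw [hfr, smul_eq_mul]
        have : |((ε⁻¹:ℝ) ^ 2)⁻¹| = ε ^ 2 := by
          rw [abs_of_pos (by positivity)]
          field_simp
        rw [this]
        field_simp
end
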